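/- arXiv:1207.1729 — 12 statements merged into one kernel-verified Lean document; each statement's English description precedes it below -/
import Mathlib

section
/- Let a, b, c, d : ℤ² → ℝ with b, c, d nowhere-vanishing. Then the hyperbolic operator L on functions ψ : ℤ² → ℝ defined by (Lψ)(m,n) = a(m,n)ψ(m,n) + b(m,n)ψ(m+1,n) + c(m,n)ψ(m,n+1) + d(m,n)ψ(m+1,n+1) admits both a right and a left factorization: there exist a nowhere-vanishing f : ℤ² → ℝ and functions u, v, w : ℤ² → ℝ such that pointwise f·(1+w) = a, f·u = b, f·v = c and f·u·v₁ = d (so L = f·[(1+uT₁)(1+vT₂)+w]); and there exist a nowhere-vanishing g : ℤ² → ℝ and functions ũ, ṽ, w_L : ℤ² → ℝ such that pointwise g·(1+w_L) = a, g·ũ = b, g·ṽ = c and g·ṽ·ũ₂ = d (so L = g·[(1+ṽT₂)(1+ũT₁)+w_L]). -/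
/-- Every hyperbolic second-order difference operator
`(Lψ)(m,n) = a ψ(m,n) + b ψ(m+1,n) + c ψ(m,n+1) + d ψ(m+1,n+1)` on the square lattice,
with `b, c, d` nowhere-vanishing, admits both a right factorization
`L = f·[(1+uT₁)(1+vT₂)+w]` and a left factorization `L = g·[(1+ṽT₂)(1+ũT₁)+w_L]`. -/
theorem hyperbolic_operator_right_and_left_factorization
    (a b c d : ℤ × ℤ → ℝ)
    (hb : ∀ p, b p ≠ 0) (hc : ∀ p, c p ≠ 0) (hd : ∀ p, d p ≠ 0) :
    (∃ f u v w : ℤ × ℤ → ℝ, (∀ p, f p ≠ 0) ∧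
      (∀ m n : ℤ, f (m, n) * (1 + w (m, n)) = a (m, n)) ∧
      (∀ m n : ℤ, f (m, n) * u (m, n) = b (m, n)) ∧
      (∀ m n : ℤ, f (m, n) * v (m, n) = c (m, n)) ∧
      (∀ m n : ℤ, f (m, n) * u (m, n) * v (m + 1, n) = d (m, n))) ∧
    (∃ g tu tv wL : ℤ × ℤ → ℝ, (∀ p, g p ≠ 0) ∧
      (∀ m n : ℤ, g (m, n) * (1 + wL (m, n)) = a (m, n)) ∧
      (∀ m n : ℤ, g (m, n) * tu (m, n) = b (m, n)) ∧
      (∀ m n : ℤ, g (m, n) * tv (m, n) = c (m, n)) ∧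
      (∀ m n : ℤ, g (m, n) * tv (m, n) * tu (m, n + 1) = d (m, n))) := by
  constructor
  · -- right factorization: f(m,n) = b(m-1,n) c(m,n) / d(m-1,n)
    set f : ℤ × ℤ → ℝ := fun p => b (p.1 - 1, p.2) * c p / d (p.1 - 1, p.2) with hf
    have hfne : ∀ p, f p ≠ 0 := fun p =>
      div_ne_zero (mul_ne_zero (hb _) (hc _)) (hd _)
    refine ⟨f, fun p => b p / f p, fun p => c p / f p, fun p => a p / f p - 1,
      hfne, ?_, ?_, ?_, ?_⟩
    · intro m n
      have h := hfne (m, n)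
      field_simp
      ring
    · intro m n
      have h := hfne (m, n)
      field_simp
    · intro m n
      have h := hfne (m, n)
      field_simp
    · intro m n
      have h1 : f (m + 1, n) = b (m, n) * c (m + 1, n) / d (m, n) := by
        simp only [hf]
        norm_num
      have h := hfne (m, n)
      show f (m, n) * (b (m, n) / f (m, n)) * (c (m + 1, n) / f (m + 1, n)) = d (m, n)
      rw [h1]
      have h2 := hc (1 + m, n)
      have h3 := hb (m, n)
      field_simp
      rw [mul_div_cancel_left₀ _ (hc (m + 1, n))]
  · -- left factorization: g(m,n) = c(m,n-1) b(m,n) / d(m,n-1)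
    set g : ℤ × ℤ → ℝ := fun p => c (p.1, p.2 - 1) * b p / d (p.1, p.2 - 1) with hg
    have hgne : ∀ p, g p ≠ 0 := fun p =>
      div_ne_zero (mul_ne_zero (hc _) (hb _)) (hd _)
    refine ⟨g, fun p => b p / g p, fun p => c p / g p, fun p => a p / g p - 1,
      hgne, ?_, ?_, ?_, ?_⟩
    · intro m n
      have h := hgne (m, n)
      field_simp
      ring
    · intro m n
      have h := hgne (m, n)
      field_simp
    · intro m n
      have h := hgne (m, n)
      field_simp
    · intro m n
      have h1 : g (m, n + 1) = c (m, n) * b (m, n + 1) / d (m, n) := by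
        simp only [hg]
        norm_num
      have h := hgne (m, n)
      show g (m, n) * (c (m, n) / g (m, n)) * (b (m, n + 1) / g (m, n + 1)) = d (m, n)
      rw [h1]
      have h2 := hb (m, 1 + n)
      have h3 := hc (m, n)
      field_simp
      rw [mul_div_cancel_left₀ _ (hb (m, n + 1))]
end

section
/- Let u, v, w : ℤ² → ℝ with w nowhere-vanishing, and let ψ : ℤ² → ℝ satisfy ((1+uT₁)(1+vT₂)+w)ψ = 0, that is, (1+w(m,n))ψ(m,n) + u(m,n)ψ(m+1,n) + v(m,n)ψ(m,n+1) + u(m,n)v(m+1,n)ψ(m+1,n+1) = 0 for all (m,n). Define φ = (1+vT₂)ψ, i.e. φ(m,n) = ψ(m,n) + v(m,n)ψ(m,n+1), and χ(m,n) = (φ(m,n) + u(m,n)φ(m+1,n))/w(m,n). Then ((1+vT₂)w⁻¹(1+uT₁)+1)φ = 0, that is, χ(m,n) + v(m,n)χ(m,n+1) + φ(m,n) = 0 for all (m,n). -/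
/-- Laplace transformation of a hyperbolic difference operator on the
square lattice: if `((1+uT₁)(1+vT₂)+w)ψ = 0` with `w` nowhere-vanishing, then
`φ = (1+vT₂)ψ` satisfies `((1+vT₂)w⁻¹(1+uT₁)+1)φ = 0`, where
`χ = w⁻¹(1+uT₁)φ`. -/
theorem laplace_transformation_of_solutions
    (u v w ψ φ χ : ℤ × ℤ → ℝ)
    (hw : ∀ p, w p ≠ 0)
    (hψ : ∀ m n : ℤ, (1 + w (m, n)) * ψ (m, n) + u (m, n) * ψ (m + 1, n)
      + v (m, n) * ψ (m, n + 1) + u (m, n) * v (m + 1, n) * ψ (m + 1, n + 1) = 0)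
    (hφ : ∀ m n : ℤ, φ (m, n) = ψ (m, n) + v (m, n) * ψ (m, n + 1))
    (hχ : ∀ m n : ℤ, χ (m, n) = (φ (m, n) + u (m, n) * φ (m + 1, n)) / w (m, n)) :
    ∀ m n : ℤ, χ (m, n) + v (m, n) * χ (m, n + 1) + φ (m, n) = 0 := by
  have key : ∀ m n : ℤ, χ (m, n) = -ψ (m, n) := by
    intro m n
    rw [hχ, hφ, hφ]
    rw [div_eq_iff (hw (m, n))]
    have h := hψ m n
    ring_nf
    ring_nf at h
    linarith
  intro m n
  rw [key, key, hφ]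
  ring
end

section
/- Let u, v, w : ℤ² → ℝ be nowhere-vanishing, set H = v·u₂/(u·v₁), and define f'(m,n) = H(m−1,n)·w(m−1,n)·w(m,n+1)/w(m−1,n+1), u' = f'·u/w, v' = f'·v/w₂, w' = f'·(1+w)/w − 1. Then the operator identity f'·[(1+vT₂)w⁻¹(1+uT₁)+1] = (1+u'T₁)(1+v'T₂)+w' holds, i.e. for every ψ : ℤ² → ℝ and every (m,n): f'(m,n)·[ (ψ(m,n)+u(m,n)ψ(m+1,n))/w(m,n) + v(m,n)·(ψ(m,n+1)+u(m,n+1)ψ(m+1,n+1))/w(m,n+1) + ψ(m,n) ] = (1+w'(m,n))ψ(m,n) + u'(m,n)ψ(m+1,n) + v'(m,n)ψ(m,n+1) + u'(m,n)v'(m+1,n)ψ(m+1,n+1). Moreover (f',u',v',w') is the unique quadruple of functions with f' nowhere-vanishing satisfying this identity. -/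
/-- For nowhere-vanishing `u, v, w` on the square lattice, with
`H = v·u₂/(u·v₁)`, `f'(m,n) = H(m−1,n)·w(m−1,n)·w(m,n+1)/w(m−1,n+1)`,
`u' = f'·u/w`, `v' = f'·v/w₂`, `w' = f'·(1+w)/w − 1`, the operator identity
`f'·[(1+vT₂)w⁻¹(1+uT₁)+1] = (1+u'T₁)(1+v'T₂)+w'` holds, and `(f',u',v',w')` is the
unique such quadruple with `f'` nowhere-vanishing. -/
theorem laplace_transform_normalized_gauge_identity_and_uniqueness
    (u v w H f' u' v' w' : ℤ × ℤ → ℝ)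
    (hu : ∀ p, u p ≠ 0) (hv : ∀ p, v p ≠ 0) (hw : ∀ p, w p ≠ 0)
    (hH : ∀ m n : ℤ, H (m, n) = v (m, n) * u (m, n + 1) / (u (m, n) * v (m + 1, n)))
    (hf' : ∀ m n : ℤ,
      f' (m, n) = H (m - 1, n) * w (m - 1, n) * w (m, n + 1) / w (m - 1, n + 1))
    (hu' : ∀ m n : ℤ, u' (m, n) = f' (m, n) * u (m, n) / w (m, n))
    (hv' : ∀ m n : ℤ, v' (m, n) = f' (m, n) * v (m, n) / w (m, n + 1))
    (hw' : ∀ m n : ℤ, w' (m, n) = f' (m, n) * (1 + w (m, n)) / w (m, n) - 1) :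
    (∀ ψ : ℤ × ℤ → ℝ, ∀ m n : ℤ,
      f' (m, n) * ((ψ (m, n) + u (m, n) * ψ (m + 1, n)) / w (m, n)
        + v (m, n) * (ψ (m, n + 1) + u (m, n + 1) * ψ (m + 1, n + 1)) / w (m, n + 1)
        + ψ (m, n))
      = (1 + w' (m, n)) * ψ (m, n) + u' (m, n) * ψ (m + 1, n)
        + v' (m, n) * ψ (m, n + 1) + u' (m, n) * v' (m + 1, n) * ψ (m + 1, n + 1)) ∧
    (∀ g ug vg wg : ℤ × ℤ → ℝ, (∀ p, g p ≠ 0) →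
      (∀ ψ : ℤ × ℤ → ℝ, ∀ m n : ℤ,
        g (m, n) * ((ψ (m, n) + u (m, n) * ψ (m + 1, n)) / w (m, n)
          + v (m, n) * (ψ (m, n + 1) + u (m, n + 1) * ψ (m + 1, n + 1)) / w (m, n + 1)
          + ψ (m, n))
        = (1 + wg (m, n)) * ψ (m, n) + ug (m, n) * ψ (m + 1, n)
          + vg (m, n) * ψ (m, n + 1) + ug (m, n) * vg (m + 1, n) * ψ (m + 1, n + 1)) →
      g = f' ∧ ug = u' ∧ vg = v' ∧ wg = w') := by
  have hf1 : ∀ m n : ℤ, f' (m + 1, n)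
      = v (m, n) * u (m, n + 1) / (u (m, n) * v (m + 1, n))
        * w (m, n) * w (m + 1, n + 1) / w (m, n + 1) := by
    intro m n
    have h := hf' (m + 1) n
    rw [show (m + 1 - 1 : ℤ) = m by ring] at h
    rw [h, hH]
  have hcross : ∀ m n : ℤ, u' (m, n) * v' (m + 1, n)
      = f' (m, n) * v (m, n) * u (m, n + 1) / w (m, n + 1) := by
    intro m n
    have hu1 := hu (m, n); have hv1 := hv (m + 1, n)
    have hw1 := hw (m, n); have hw2 := hw (m + 1, n + 1); have hw3 := hw (m, n + 1)
    rw [hu' m n, hv' (m + 1) n, hf1 m n]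
    field_simp
  constructor
  · intro ψ m n
    have hw1 := hw (m, n); have hw2 := hw (m, n + 1)
    rw [hcross m n, hu' m n, hv' m n, hw' m n]
    field_simp
    ring
  · intro g ug vg wg hg heq
    have hug : ∀ m n : ℤ, ug (m, n) = g (m, n) * u (m, n) / w (m, n) := by
      intro m n
      have h := heq (fun p => if p = (m + 1, n) then 1 else 0) m n
      simp at h
      rw [← h]; ring
    have hvg : ∀ m n : ℤ, vg (m, n) = g (m, n) * v (m, n) / w (m, n + 1) := by
      intro m n
      have h := heq (fun p => if p = (m, n + 1) then 1 else 0) m n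
      simp at h
      rw [← h]; ring
    have hcr : ∀ m n : ℤ, ug (m, n) * vg (m + 1, n)
        = g (m, n) * v (m, n) * u (m, n + 1) / w (m, n + 1) := by
      intro m n
      have h := heq (fun p => if p = (m + 1, n + 1) then 1 else 0) m n
      simp at h
      rw [← h]; ring
    have hwg : ∀ m n : ℤ, wg (m, n) = g (m, n) * (1 + w (m, n)) / w (m, n) - 1 := by
      intro m n
      have hw1 := hw (m, n)
      have h := heq (fun p => if p = (m, n) then 1 else 0) m n
      simp at h
      field_simp at h ⊢
      linarith [h]
    have hgf : ∀ m n : ℤ, g (m, n) = f' (m, n) := by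
      intro m n
      have h := hcr (m - 1) n
      rw [hug (m - 1) n, hvg, show (m - 1 + 1 : ℤ) = m by ring] at h
      rw [hf' m n, hH, show (m - 1 + 1 : ℤ) = m by ring]
      have hg1 := hg (m - 1, n)
      have hu1 := hu (m - 1, n); have hv1 := hv (m, n)
      have hw1 := hw (m - 1, n); have hw2 := hw (m - 1, n + 1); have hw3 := hw (m, n + 1)
      field_simp at h ⊢
      apply mul_left_cancel₀ hg1
      linear_combination g (m - 1, n) * h
    have hgeq : g = f' := by
      funext p; obtain ⟨m, n⟩ := p; exact hgf m n
    refine ⟨hgeq, ?_, ?_, ?_⟩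
    · funext p; obtain ⟨m, n⟩ := p
      rw [hug m n, hu' m n, hgf m n]
    · funext p; obtain ⟨m, n⟩ := p
      rw [hvg m n, hv' m n, hgf m n]
    · funext p; obtain ⟨m, n⟩ := p
      rw [hwg m n, hw' m n, hgf m n]
end

section
/- Let u, v, w : ℤ² → ℝ be nowhere-vanishing, set H = v·u₂/(u·v₁), and let (u',v',w') be the Laplace transform of (u,v,w) in the normalized gauge: u' = f'·u/w, v' = f'·v/w₂, w' = f'·(1+w)/w − 1 with f'(m,n) = H(m−1,n)·w(m−1,n)·w(m,n+1)/w(m−1,n+1). Set H' = v'·u'₂/(u'·v'₁). Then the gauge invariants transform by: (i) H'·(1+w₂) = 1+w'₂, and (ii) (1+w'₁)·w₁·w₂ = (1+w₁)·H·w·w₁₂. -/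
/-- Transformation law of the gauge invariants (potential `w` and
curvature `H = v·u₂/(u·v₁)`) under the Laplace transformation in the normalized gauge:
(i) `H'·(1+w₂) = 1+w'₂` and (ii) `(1+w'₁)·w₁·w₂ = (1+w₁)·H·w·w₁₂`. -/
theorem laplace_transform_of_gauge_invariants
    (u v w H f' u' v' w' H' : ℤ × ℤ → ℝ)
    (hu : ∀ p, u p ≠ 0) (hv : ∀ p, v p ≠ 0) (hw : ∀ p, w p ≠ 0)
    (hH : ∀ m n : ℤ, H (m, n) = v (m, n) * u (m, n + 1) / (u (m, n) * v (m + 1, n)))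
    (hf' : ∀ m n : ℤ,
      f' (m, n) = H (m - 1, n) * w (m - 1, n) * w (m, n + 1) / w (m - 1, n + 1))
    (hu' : ∀ m n : ℤ, u' (m, n) = f' (m, n) * u (m, n) / w (m, n))
    (hv' : ∀ m n : ℤ, v' (m, n) = f' (m, n) * v (m, n) / w (m, n + 1))
    (hw' : ∀ m n : ℤ, w' (m, n) = f' (m, n) * (1 + w (m, n)) / w (m, n) - 1)
    (hH' : ∀ m n : ℤ,
      H' (m, n) = v' (m, n) * u' (m, n + 1) / (u' (m, n) * v' (m + 1, n))) :
    (∀ m n : ℤ, H' (m, n) * (1 + w (m, n + 1)) = 1 + w' (m, n + 1)) ∧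
    (∀ m n : ℤ, (1 + w' (m + 1, n)) * w (m + 1, n) * w (m, n + 1)
      = (1 + w (m + 1, n)) * H (m, n) * w (m, n) * w (m + 1, n + 1)) := by
  have hf2 : ∀ m n : ℤ, f' (m, n) = v (m - 1, n) * u (m - 1, n + 1)
      / (u (m - 1, n) * v (m, n)) * w (m - 1, n) * w (m, n + 1) / w (m - 1, n + 1) := by
    intro m n
    rw [hf', hH (m - 1) n, sub_add_cancel]
  constructor
  · intro m n
    have e1 : f' (m, n) = v (m - 1, n) * u (m - 1, n + 1)
        / (u (m - 1, n) * v (m, n)) * w (m - 1, n) * w (m, n + 1) / w (m - 1, n + 1) :=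
      hf2 m n
    have e2 := hf2 m (n + 1)
    have e3 := hf2 (m + 1) n
    rw [add_sub_cancel_right] at e3
    rw [hH', hw', hv' m n, hv' (m + 1) n, hu' m (n + 1), hu' m n, e1, e2, e3]
    have h1 := hu (m - 1, n); have h2 := hu (m - 1, n + 1); have h3 := hu (m - 1, n + 1 + 1)
    have h4 := hu (m, n); have h5 := hu (m, n + 1)
    have h6 := hv (m - 1, n); have h7 := hv (m - 1, n + 1); have h8 := hv (m, n)
    have h9 := hv (m, n + 1); have h10 := hv (m + 1, n)
    have k1 := hw (m - 1, n); have k2 := hw (m - 1, n + 1); have k3 := hw (m - 1, n + 1 + 1)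
    have k4 := hw (m, n); have k5 := hw (m, n + 1); have k6 := hw (m, n + 1 + 1)
    have k7 := hw (m + 1, n); have k8 := hw (m + 1, n + 1)
    field_simp
    ring
  · intro m n
    have e3 := hf2 (m + 1) n
    rw [add_sub_cancel_right] at e3
    rw [hw', e3, hH]
    have h4 := hu (m, n); have h5 := hu (m, n + 1)
    have h8 := hv (m, n); have h10 := hv (m + 1, n)
    have k4 := hw (m, n); have k7 := hw (m + 1, n)
    have k5 := hw (m, n + 1); have k8 := hw (m + 1, n + 1)
    field_simp
    ring
end

section
/- Let u, v, w : ℤ² → ℝ be nowhere-vanishing, let (u',v',w') be the Laplace transform of (u,v,w) in the normalized gauge, assume w' is nowhere-vanishing, and let (u'',v'',w'') be the Laplace transform of (u',v',w') in the normalized gauge. Then the discrete 2D Toda lattice chain equation holds: (1+w''₁)·(1+w₂)·w'₁·w'₂ = (1+w'₁)·(1+w'₂)·w'·w'₁₂ at every point of ℤ², i.e. ((w''₁+1)/(w'₁+1))·((w₂+1)/(w'₂+1)) = w'w'₁₂/(w'₁w'₂) whenever the denominators are nonzero. -/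
/-- The discrete 2D Toda lattice chain equation for two successive
Laplace transformations `(u,v,w) → (u',v',w') → (u'',v'',w'')` in the normalized gauge:
`(1+w''₁)·(1+w₂)·w'₁·w'₂ = (1+w'₁)·(1+w'₂)·w'·w'₁₂`. -/
theorem discrete_toda_chain_equation
    (u v w H f' u' v' w' H' f'' u'' v'' w'' : ℤ × ℤ → ℝ)
    (hu : ∀ p, u p ≠ 0) (hv : ∀ p, v p ≠ 0) (hw : ∀ p, w p ≠ 0)
    -- the Laplace transform of (u,v,w) in the normalized gauge
    (hH : ∀ m n : ℤ, H (m, n) = v (m, n) * u (m, n + 1) / (u (m, n) * v (m + 1, n)))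
    (hf' : ∀ m n : ℤ,
      f' (m, n) = H (m - 1, n) * w (m - 1, n) * w (m, n + 1) / w (m - 1, n + 1))
    (hu' : ∀ m n : ℤ, u' (m, n) = f' (m, n) * u (m, n) / w (m, n))
    (hv' : ∀ m n : ℤ, v' (m, n) = f' (m, n) * v (m, n) / w (m, n + 1))
    (hw' : ∀ m n : ℤ, w' (m, n) = f' (m, n) * (1 + w (m, n)) / w (m, n) - 1)
    (hw'0 : ∀ p, w' p ≠ 0)
    -- the Laplace transform of (u',v',w') in the normalized gauge
    (hH' : ∀ m n : ℤ,
      H' (m, n) = v' (m, n) * u' (m, n + 1) / (u' (m, n) * v' (m + 1, n)))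
    (hf'' : ∀ m n : ℤ,
      f'' (m, n) = H' (m - 1, n) * w' (m - 1, n) * w' (m, n + 1) / w' (m - 1, n + 1))
    (hu'' : ∀ m n : ℤ, u'' (m, n) = f'' (m, n) * u' (m, n) / w' (m, n))
    (hv'' : ∀ m n : ℤ, v'' (m, n) = f'' (m, n) * v' (m, n) / w' (m, n + 1))
    (hw'' : ∀ m n : ℤ, w'' (m, n) = f'' (m, n) * (1 + w' (m, n)) / w' (m, n) - 1) :
    ∀ m n : ℤ,
      (1 + w'' (m + 1, n)) * (1 + w (m, n + 1)) * (w' (m + 1, n) * w' (m, n + 1))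
      = (1 + w' (m + 1, n)) * (1 + w' (m, n + 1)) * (w' (m, n) * w' (m + 1, n + 1)) := by
  intro m n
  -- H is nowhere zero
  have hH0 : ∀ m n : ℤ, H (m, n) ≠ 0 := by
    intro a b
    rw [hH]
    exact div_ne_zero (mul_ne_zero (hv _) (hu _)) (mul_ne_zero (hu _) (hv _))
  -- f' is nowhere zero
  have hf'0 : ∀ m n : ℤ, f' (m, n) ≠ 0 := by
    intro a b
    rw [hf']
    exact div_ne_zero (mul_ne_zero (mul_ne_zero (hH0 _ _) (hw _)) (hw _)) (hw _)
  -- key: 1 + w' = f' * (1 + w) / w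
  have key : ∀ a b : ℤ, 1 + w' (a, b) = f' (a, b) * (1 + w (a, b)) / w (a, b) := by
    intro a b; rw [hw' a b]; ring
  -- f' shifted: f' (a+1, b) computed via H (a, b)
  have hf'shift : ∀ a b : ℤ,
      f' (a + 1, b) = H (a, b) * w (a, b) * w (a + 1, b + 1) / w (a, b + 1) := by
    intro a b
    have := hf' (a + 1) b
    simpa using this
  -- key2 : H' (m,n) = f' (m, n+1) / w (m, n+1)
  have key2 : H' (m, n) = f' (m, n + 1) / w (m, n + 1) := by
    rw [hH' m n, hv' m n, hu' m (n + 1), hu' m n, hv' (m + 1) n,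
      hf'shift m n, hf' m (n + 1), hH m n]
    have h1 := hu (m, n); have h2 := hu (m, n + 1); have h3 := hv (m, n)
    have h4 := hv (m + 1, n); have h5 := hw (m, n); have h6 := hw (m, n + 1)
    have h7 := hw (m + 1, n + 1)
    have h8 := hw (m - 1, n + 1); have h9 := hw (m - 1, n + 1 + 1)
    have h10 := hH0 (m - 1) (n + 1)
    have h11 := hf'0 m n
    field_simp
  -- f'' shifted
  have hf''shift : f'' (m + 1, n)
      = H' (m, n) * w' (m, n) * w' (m + 1, n + 1) / w' (m, n + 1) := by
    have := hf'' (m + 1) n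
    simpa using this
  -- key3 : 1 + w'' (m+1,n)
  have key3 : 1 + w'' (m + 1, n)
      = f'' (m + 1, n) * (1 + w' (m + 1, n)) / w' (m + 1, n) := by
    rw [hw'' (m + 1) n]; ring
  rw [key3, hf''shift, key2, key m (n + 1)]
  have h1 := hw'0 (m + 1, n); have h2 := hw'0 (m, n + 1)
  have h3 := hw (m, n + 1); have h4 := hf'0 m (n + 1)
  field_simp
end

section
/- Let a, b : ℤ² → ℝ be nowhere-vanishing with 1+a₁, 1+a₂, 1+b₁, 1+b₂ nowhere-vanishing, and suppose the period-2 discrete Toda chain equations hold at every point: (a₁+1)(a₂+1)·b₁·b₂ = (b₁+1)(b₂+1)·b·b₁₂ and (b₁+1)(b₂+1)·a₁·a₂ = (a₁+1)(a₂+1)·a·a₁₂. Then the function G = a·b satisfies G·G₁₂ = G₁·G₂ at every point of ℤ². -/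
/-- For the period-2 cyclic Laplace chain `w^{2k} = a`, `w^{2k+1} = b`
of the discrete 2D Toda lattice, the product `G = a·b` satisfies `G·G₁₂ = G₁·G₂`. -/
theorem period_two_toda_chain_product_equation
    (a b : ℤ × ℤ → ℝ)
    (ha : ∀ p, a p ≠ 0) (hb : ∀ p, b p ≠ 0)
    (ha1 : ∀ m n : ℤ, 1 + a (m + 1, n) ≠ 0) (ha2 : ∀ m n : ℤ, 1 + a (m, n + 1) ≠ 0)
    (hb1 : ∀ m n : ℤ, 1 + b (m + 1, n) ≠ 0) (hb2 : ∀ m n : ℤ, 1 + b (m, n + 1) ≠ 0)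
    (hchain1 : ∀ m n : ℤ,
      (a (m + 1, n) + 1) * (a (m, n + 1) + 1) * (b (m + 1, n) * b (m, n + 1))
      = (b (m + 1, n) + 1) * (b (m, n + 1) + 1) * (b (m, n) * b (m + 1, n + 1)))
    (hchain2 : ∀ m n : ℤ,
      (b (m + 1, n) + 1) * (b (m, n + 1) + 1) * (a (m + 1, n) * a (m, n + 1))
      = (a (m + 1, n) + 1) * (a (m, n + 1) + 1) * (a (m, n) * a (m + 1, n + 1))) :
    ∀ m n : ℤ,
      (a (m, n) * b (m, n)) * (a (m + 1, n + 1) * b (m + 1, n + 1))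
      = (a (m + 1, n) * b (m + 1, n)) * (a (m, n + 1) * b (m, n + 1)) := by
  intro m n
  have ha1' : a (m + 1, n) + 1 ≠ 0 := by have := ha1 m n; intro h; apply this; linarith
  have ha2' : a (m, n + 1) + 1 ≠ 0 := by have := ha2 m n; intro h; apply this; linarith
  have hb1' : b (m + 1, n) + 1 ≠ 0 := by have := hb1 m n; intro h; apply this; linarith
  have hb2' : b (m, n + 1) + 1 ≠ 0 := by have := hb2 m n; intro h; apply this; linarith
  have key := congrArg₂ (· * ·) (hchain1 m n) (hchain2 m n)
  have := mul_ne_zero (mul_ne_zero (mul_ne_zero ha1' ha2') hb1') hb2'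
  apply mul_left_cancel₀ this
  nlinarith [key]
end

section
/- Let C ∈ ℝ, C ≠ 0, let b : ℤ² → ℝ be nowhere-vanishing with 1+b₁ and 1+b₂ nowhere-vanishing, and set a = C/b (pointwise). If the chain equation (a₁+1)(a₂+1)·b₁·b₂ = (b₁+1)(b₂+1)·b·b₁₂ holds at every point, then b satisfies the discrete sinh-Gordon type equation (C+b₁)·(C+b₂) = b·b₁₂·(1+b₁)·(1+b₂) at every point of ℤ², i.e. ((C+b₁)/(1+b₁))·((C+b₂)/(1+b₂)) = b·b₁₂. -/
/-- The period-2 cyclic reduction of the discrete 2D Toda lattice with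
`a = C/b` yields the discrete sinh-Gordon type equation
`(C+b₁)·(C+b₂) = b·b₁₂·(1+b₁)·(1+b₂)`. -/
theorem discrete_sinh_gordon_reduction
    (C : ℝ) (hC : C ≠ 0)
    (b a : ℤ × ℤ → ℝ)
    (hb : ∀ p, b p ≠ 0)
    (hb1 : ∀ m n : ℤ, 1 + b (m + 1, n) ≠ 0) (hb2 : ∀ m n : ℤ, 1 + b (m, n + 1) ≠ 0)
    (ha : ∀ p, a p = C / b p)
    (hchain : ∀ m n : ℤ,
      (a (m + 1, n) + 1) * (a (m, n + 1) + 1) * (b (m + 1, n) * b (m, n + 1))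
      = (b (m + 1, n) + 1) * (b (m, n + 1) + 1) * (b (m, n) * b (m + 1, n + 1))) :
    ∀ m n : ℤ,
      (C + b (m + 1, n)) * (C + b (m, n + 1))
      = b (m, n) * b (m + 1, n + 1) * (1 + b (m + 1, n)) * (1 + b (m, n + 1)) := by
  intro m n
  have h := hchain m n
  rw [ha, ha] at h
  have h1 := hb (m + 1, n)
  have h2 := hb (m, n + 1)
  field_simp at h
  linarith [h]
end

section
/- Let b, c, d : ℤ² → ℝ be everywhere positive. Then there exist unique everywhere positive functions u, v, w : ℤ² → ℝ with u·v = b, u·w = c, v·w = d pointwise (namely u = √(bc/d), v = √(bd/c), w = √(cd/b)); and with this choice, for every ψ : ℤ² → ℝ and every (m,n): (Q⁺Qψ)(m,n) = (u(m,n)² + v(m−1,n)² + w(m,n−1)²)ψ(m,n) + b(m,n)ψ(m+1,n) + b(m−1,n)ψ(m−1,n) + c(m,n)ψ(m,n+1) + c(m,n−1)ψ(m,n−1) + d(m−1,n)ψ(m−1,n+1) + d(m,n−1)ψ(m+1,n−1). Consequently every real self-adjoint second-order operator L on the equilateral triangle lattice with positive nearest-neighbour couplings b, c, d and arbitrary diagonal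 part a admits a unique factorization L = Q⁺Q + W with u, v, w positive, where W = a − u² − (v₋₁)² − (w₋₂)². -/
/-- The black triangle operator `Q = u + vT₁ + wT₂` on the equilateral triangle lattice. -/
def triQ (u v w : ℤ × ℤ → ℝ) (ψ : ℤ × ℤ → ℝ) : ℤ × ℤ → ℝ :=
  fun p => u p * ψ p + v p * ψ (p.1 + 1, p.2) + w p * ψ (p.1, p.2 + 1)

/-- The formal adjoint `Q⁺` of the black triangle operator. -/
def triQadj (u v w : ℤ × ℤ → ℝ) (ψ : ℤ × ℤ → ℝ) : ℤ × ℤ → ℝ :=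
  fun p => u p * ψ p + v (p.1 - 1, p.2) * ψ (p.1 - 1, p.2)
    + w (p.1, p.2 - 1) * ψ (p.1, p.2 - 1)

/-- Given positive couplings `b, c, d` on the edges of the equilateral
triangle lattice, there are unique positive `u, v, w` with `u·v = b`, `u·w = c`,
`v·w = d`; for this choice `Q⁺Q` has the stated second-order form, and consequently the
self-adjoint operator `L` with couplings `b, c, d` and diagonal part `a` factorizes
uniquely as `L = Q⁺Q + W` with `W = a − u² − (v₋₁)² − (w₋₂)²`. -/
theorem triangle_lattice_factorization
    (a b c d : ℤ × ℤ → ℝ)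
    (hb : ∀ p, 0 < b p) (hc : ∀ p, 0 < c p) (hd : ∀ p, 0 < d p) :
    ∃ u v w : ℤ × ℤ → ℝ,
      ((∀ p, 0 < u p) ∧ (∀ p, 0 < v p) ∧ (∀ p, 0 < w p) ∧
        (∀ p, u p * v p = b p) ∧ (∀ p, u p * w p = c p) ∧ (∀ p, v p * w p = d p)) ∧
      -- uniqueness of the positive factorization
      (∀ u' v' w' : ℤ × ℤ → ℝ,
        (∀ p, 0 < u' p) → (∀ p, 0 < v' p) → (∀ p, 0 < w' p) →
        (∀ p, u' p * v' p = b p) → (∀ p, u' p * w' p = c p) → (∀ p, v' p * w' p = d p) →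
        u' = u ∧ v' = v ∧ w' = w) ∧
      -- the explicit values
      (∀ p, u p = Real.sqrt (b p * c p / d p)) ∧
      (∀ p, v p = Real.sqrt (b p * d p / c p)) ∧
      (∀ p, w p = Real.sqrt (c p * d p / b p)) ∧
      -- the second-order form of Q⁺Q
      (∀ ψ : ℤ × ℤ → ℝ, ∀ m n : ℤ,
        triQadj u v w (triQ u v w ψ) (m, n)
        = (u (m, n) ^ 2 + v (m - 1, n) ^ 2 + w (m, n - 1) ^ 2) * ψ (m, n)
          + b (m, n) * ψ (m + 1, n) + b (m - 1, n) * ψ (m - 1, n)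
          + c (m, n) * ψ (m, n + 1) + c (m, n - 1) * ψ (m, n - 1)
          + d (m - 1, n) * ψ (m - 1, n + 1) + d (m, n - 1) * ψ (m + 1, n - 1)) ∧
      -- consequently L = Q⁺Q + W with W = a − u² − (v₋₁)² − (w₋₂)²
      (∀ ψ : ℤ × ℤ → ℝ, ∀ m n : ℤ,
        triQadj u v w (triQ u v w ψ) (m, n)
          + (a (m, n) - u (m, n) ^ 2 - v (m - 1, n) ^ 2 - w (m, n - 1) ^ 2) * ψ (m, n)
        = a (m, n) * ψ (m, n)
          + b (m, n) * ψ (m + 1, n) + b (m - 1, n) * ψ (m - 1, n)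
          + c (m, n) * ψ (m, n + 1) + c (m, n - 1) * ψ (m, n - 1)
          + d (m - 1, n) * ψ (m - 1, n + 1) + d (m, n - 1) * ψ (m + 1, n - 1)) := by
  set u : ℤ × ℤ → ℝ := fun p => Real.sqrt (b p * c p / d p) with hu_def
  set v : ℤ × ℤ → ℝ := fun p => Real.sqrt (b p * d p / c p) with hv_def
  set w : ℤ × ℤ → ℝ := fun p => Real.sqrt (c p * d p / b p) with hw_def
  have hu : ∀ p, 0 < u p := fun p =>
    Real.sqrt_pos.mpr (div_pos (mul_pos (hb p) (hc p)) (hd p))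
  have hv : ∀ p, 0 < v p := fun p =>
    Real.sqrt_pos.mpr (div_pos (mul_pos (hb p) (hd p)) (hc p))
  have hw : ∀ p, 0 < w p := fun p =>
    Real.sqrt_pos.mpr (div_pos (mul_pos (hc p) (hd p)) (hb p))
  have huv : ∀ p, u p * v p = b p := by
    intro p
    have hbp := (hb p).ne'; have hcp := (hc p).ne'; have hdp := (hd p).ne'
    rw [hu_def, hv_def]
    rw [← Real.sqrt_mul (div_pos (mul_pos (hb p) (hc p)) (hd p)).le]
    have : b p * c p / d p * (b p * d p / c p) = b p ^ 2 := by
      field_simp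
    rw [this, Real.sqrt_sq (hb p).le]
  have huw : ∀ p, u p * w p = c p := by
    intro p
    have hbp := (hb p).ne'; have hcp := (hc p).ne'; have hdp := (hd p).ne'
    rw [hu_def, hw_def]
    rw [← Real.sqrt_mul (div_pos (mul_pos (hb p) (hc p)) (hd p)).le]
    have : b p * c p / d p * (c p * d p / b p) = c p ^ 2 := by
      field_simp
    rw [this, Real.sqrt_sq (hc p).le]
  have hvw : ∀ p, v p * w p = d p := by
    intro p
    have hbp := (hb p).ne'; have hcp := (hc p).ne'; have hdp := (hd p).ne'
    rw [hv_def, hw_def]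
    rw [← Real.sqrt_mul (div_pos (mul_pos (hb p) (hd p)) (hc p)).le]
    have : b p * d p / c p * (c p * d p / b p) = d p ^ 2 := by
      field_simp
    rw [this, Real.sqrt_sq (hd p).le]
  refine ⟨u, v, w, ⟨hu, hv, hw, huv, huw, hvw⟩, ?_, fun p => rfl, fun p => rfl,
    fun p => rfl, ?_, ?_⟩
  · intro u' v' w' hu' hv' hw' h1 h2 h3
    refine ⟨funext fun p => ?_, funext fun p => ?_, funext fun p => ?_⟩
    · have h : u' p ^ 2 = b p * c p / d p := by
        have hd' := (hd p).ne'
        field_simp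
        linear_combination (-(u' p ^ 2)) * h3 p + (u' p * v' p) * h2 p + c p * h1 p
      rw [hu_def]
      simp only
      rw [← h, Real.sqrt_sq (hu' p).le]
    · have h : v' p ^ 2 = b p * d p / c p := by
        have hc' := (hc p).ne'
        field_simp
        linear_combination (-(v' p ^ 2)) * h2 p + (u' p * v' p) * h3 p + d p * h1 p
      rw [hv_def]
      simp only
      rw [← h, Real.sqrt_sq (hv' p).le]
    · have h : w' p ^ 2 = c p * d p / b p := by
        have hb' := (hb p).ne'
        field_simp
        linear_combination (-(w' p ^ 2)) * h1 p + (u' p * w' p) * h3 p + d p * h2 p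
      rw [hw_def]
      simp only
      rw [← h, Real.sqrt_sq (hw' p).le]
  · intro ψ m n
    have e1 := huv (m, n)
    have e2 := huv (m - 1, n)
    have e3 := huw (m, n)
    have e4 := huw (m, n - 1)
    have e5 := hvw (m - 1, n)
    have e6 := hvw (m, n - 1)
    simp only [triQ, triQadj]
    have h1 : ((m : ℤ) - 1 + 1, n) = (m, n) := by simp
    have h2 : ((m : ℤ), n - 1 + 1) = (m, n) := by simp
    rw [h1, h2]
    linear_combination ψ (m + 1, n) * e1 + ψ (m - 1, n) * e2 + ψ (m, n + 1) * e3 +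
      ψ (m, n - 1) * e4 + ψ (m - 1, n + 1) * e5 + ψ (m + 1, n - 1) * e6
  · intro ψ m n
    have e1 := huv (m, n)
    have e2 := huv (m - 1, n)
    have e3 := huw (m, n)
    have e4 := huw (m, n - 1)
    have e5 := hvw (m - 1, n)
    have e6 := hvw (m, n - 1)
    simp only [triQ, triQadj]
    have h1 : ((m : ℤ) - 1 + 1, n) = (m, n) := by simp
    have h2 : ((m : ℤ), n - 1 + 1) = (m, n) := by simp
    rw [h1, h2]
    linear_combination ψ (m + 1, n) * e1 + ψ (m - 1, n) * e2 + ψ (m, n + 1) * e3 +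
      ψ (m, n - 1) * e4 + ψ (m - 1, n + 1) * e5 + ψ (m + 1, n - 1) * e6
end

section
/- Let u, v, w, u', v', w' : ℤ² → ℝ be everywhere positive and W, W' : ℤ² → ℝ, and suppose the black and white factorizations give the same operator: Q⁺Qψ + W·ψ = Q'⁺Q'ψ + W'·ψ for all ψ : ℤ² → ℝ, where (Qψ)(m,n) = u(m,n)ψ(m,n) + v(m,n)ψ(m+1,n) + w(m,n)ψ(m,n+1) and (Q'ψ)(m,n) = u'(m,n)ψ(m,n) + v'(m,n)ψ(m−1,n) + w'(m,n)ψ(m,n−1). Then for every (m,n) the products of the black-triangle coefficients and of the white-triangle coefficients attached to each edge coincide: u(m,n)·v(m,n) = u'(m+1,n)·v'(m+1,n), u(m,n)·w(m,n) = u'(m,n+1)·w'(m,n+1), and v(m,n)·w(m,n) = v'(m+1,n+1)·w'(m+1,n+1). -/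
/-- The black triangle operator `Q = u + vT₁ + wT₂`. -/
def blackQ (u v w : ℤ × ℤ → ℝ) (ψ : ℤ × ℤ → ℝ) : ℤ × ℤ → ℝ :=
  fun p => u p * ψ p + v p * ψ (p.1 + 1, p.2) + w p * ψ (p.1, p.2 + 1)

/-- The formal adjoint of the black triangle operator. -/
def blackQadj (u v w : ℤ × ℤ → ℝ) (ψ : ℤ × ℤ → ℝ) : ℤ × ℤ → ℝ :=
  fun p => u p * ψ p + v (p.1 - 1, p.2) * ψ (p.1 - 1, p.2)
    + w (p.1, p.2 - 1) * ψ (p.1, p.2 - 1)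

/-- The white triangle operator `Q' = u' + v'T₁⁻¹ + w'T₂⁻¹`. -/
def whiteQ (u' v' w' : ℤ × ℤ → ℝ) (ψ : ℤ × ℤ → ℝ) : ℤ × ℤ → ℝ :=
  fun p => u' p * ψ p + v' p * ψ (p.1 - 1, p.2) + w' p * ψ (p.1, p.2 - 1)

/-- The formal adjoint of the white triangle operator. -/
def whiteQadj (u' v' w' : ℤ × ℤ → ℝ) (ψ : ℤ × ℤ → ℝ) : ℤ × ℤ → ℝ :=
  fun p => u' p * ψ p + v' (p.1 + 1, p.2) * ψ (p.1 + 1, p.2)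
    + w' (p.1, p.2 + 1) * ψ (p.1, p.2 + 1)

/-- If the black and white factorizations `Q⁺Q + W` and `Q'⁺Q' + W'`
give the same operator on the equilateral triangle lattice, then the products of the
black-triangle and white-triangle coefficients attached to each edge coincide
(the pair `{Q, Q'}` defines an `SL₂` discrete connection). -/
theorem black_white_factorizations_give_SL2_connection
    (u v w u' v' w' : ℤ × ℤ → ℝ) (W W' : ℤ × ℤ → ℝ)
    (hu : ∀ p, 0 < u p) (hv : ∀ p, 0 < v p) (hw : ∀ p, 0 < w p)
    (hu' : ∀ p, 0 < u' p) (hv' : ∀ p, 0 < v' p) (hw' : ∀ p, 0 < w' p)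
    (hsame : ∀ ψ : ℤ × ℤ → ℝ, ∀ m n : ℤ,
      blackQadj u v w (blackQ u v w ψ) (m, n) + W (m, n) * ψ (m, n)
      = whiteQadj u' v' w' (whiteQ u' v' w' ψ) (m, n) + W' (m, n) * ψ (m, n)) :
    ∀ m n : ℤ,
      u (m, n) * v (m, n) = u' (m + 1, n) * v' (m + 1, n) ∧
      u (m, n) * w (m, n) = u' (m, n + 1) * w' (m, n + 1) ∧
      v (m, n) * w (m, n) = v' (m + 1, n + 1) * w' (m + 1, n + 1) := by
  intro m n
  refine ⟨?_, ?_, ?_⟩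
  · have h := hsame (fun q => if q = (m + 1, n) then (1 : ℝ) else 0) m n
    simp only [blackQ, blackQadj, whiteQ, whiteQadj, Prod.mk.injEq] at h
    have e1 : ¬(m - 1 = m + 1) := by omega
    have e2 : ¬(m = m + 1) := by omega
    have e3 : ¬(n - 1 = n) := by omega
    have e4 : ¬(n + 1 = n) := by omega
    simp [e1, e2, e3, e4] at h
    linarith
  · have h := hsame (fun q => if q = (m, n + 1) then (1 : ℝ) else 0) m n
    simp only [blackQ, blackQadj, whiteQ, whiteQadj, Prod.mk.injEq] at h
    have e1 : ¬(m - 1 = m) := by omega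
    have e2 : ¬(m + 1 = m) := by omega
    have e3 : ¬(n - 1 = n + 1) := by omega
    have e4 : ¬(n = n + 1) := by omega
    simp [e1, e2, e3, e4] at h
    linarith
  · have h := hsame (fun q => if q = (m, n + 1) then (1 : ℝ) else 0) (m + 1) n
    simp only [blackQ, blackQadj, whiteQ, whiteQadj, Prod.mk.injEq] at h
    have e1 : ¬(m + 1 = m) := by omega
    have e2 : ¬(m + 1 + 1 = m) := by omega
    have e3 : ¬(m + 1 - 1 + 1 = m) := by omega
    have e4 : ¬(n - 1 = n + 1) := by omega
    have e5 : ¬(n = n + 1) := by omega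
    have e6 : (m + 1 - 1 : ℤ) = m := by omega
    simp [e1, e2, e3, e4, e5, e6] at h
    linarith
end

section
/- Let G be a simple graph on a vertex set V that is a tree (connected and acyclic), let d : V → V → ℝ satisfy d(P,P') ≠ 0 whenever P and P' are adjacent, and let b : V → V → ℝ be symmetric (b(P,P') = b(P',P)). Fix a vertex P₀ ∈ V and a real number c. Then there exists exactly one function v : V → ℝ with v(P₀) = c such that b(P,P') = d(P',P)·v(P) + d(P,P')·v(P') for every pair of adjacent vertices P, P'. In particular, on a tree the solutions v of this system form a one-parameter family parametrized by the initial value v(P₀). -/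
open SimpleGraph

/-- Propagate the value along a walk using the edge relations. -/
noncomputable def solvAux {V : Type*} (G : SimpleGraph V) (d b : V → V → ℝ) :
    ∀ {u P : V}, G.Walk u P → ℝ → ℝ
  | _, _, .nil, a => a
  | _, _, @Walk.cons _ _ u x _ _ p, a =>
      solvAux G d b p ((b u x - d x u * a) / d u x)

theorem solvAux_concat {V : Type*} (G : SimpleGraph V) (d b : V → V → ℝ)
    {u x y : V} (p : G.Walk u x) (h : G.Adj x y) (a : ℝ) :
    solvAux G d b (p.concat h) a = (b x y - d y x * solvAux G d b p a) / d x y := by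
  induction p generalizing a with
  | nil => simp [Walk.concat, solvAux]
  | cons h' p ih =>
    rw [Walk.concat_cons]
    simp only [solvAux]
    exact ih _ _



/-- On a tree, the system `b(P,P') = d(P',P)·v(P) + d(P,P')·v(P')`
over the edges (with `d` nonvanishing on adjacent pairs and `b` symmetric) has exactly
one solution `v` with a prescribed value `v(P₀) = c`: the solutions form a
one-parameter family parametrized by the initial value at the selected vertex. -/
theorem tree_factorization_potential_unique
    {V : Type*} (G : SimpleGraph V) (hG : G.IsTree)
    (d : V → V → ℝ) (hd : ∀ P P', G.Adj P P' → d P P' ≠ 0)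
    (b : V → V → ℝ) (hb : ∀ P P', b P P' = b P' P)
    (P₀ : V) (c : ℝ) :
    ∃! v : V → ℝ, v P₀ = c ∧
      ∀ P P', G.Adj P P' → b P P' = d P' P * v P + d P P' * v P' := by

  classical
  have hup := hG.existsUnique_path
  choose pth hpath huniq using fun P => hup P₀ P
  set v : V → ℝ := fun P => solvAux G d b (pth P) c with hv
  have hnil : pth P₀ = Walk.nil := (huniq P₀ Walk.nil Walk.IsPath.nil).symm
  have hvP₀ : v P₀ = c := by rw [hv]; simp [hnil, solvAux]
  -- key step: value relation for the path extended (or truncated) by one edge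
  have key : ∀ P P', G.Adj P P' → P' ∉ (pth P).support →
      v P' = (b P P' - d P' P * v P) / d P P' := by
    intro P P' h hmem
    have hcp : ((pth P).concat h).IsPath := by
      rw [← Walk.isPath_reverse_iff, Walk.reverse_concat, Walk.cons_isPath_iff]
      refine ⟨(Walk.isPath_reverse_iff _).2 (hpath P), ?_⟩
      simpa [Walk.support_reverse] using hmem
    have := huniq P' _ hcp
    rw [hv]
    simp only
    rw [← this, solvAux_concat]
  have relation : ∀ P P', G.Adj P P' → b P P' = d P' P * v P + d P P' * v P' := by
    intro P P' h
    by_cases hmem : P' ∈ (pth P).support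
    · -- then pth P = (pth P').concat h.symm
      have hq : ((pth P).takeUntil P' hmem).IsPath := (hpath P).takeUntil hmem
      have hqe : pth P' = (pth P).takeUntil P' hmem := (huniq P' _ hq).symm
      have hdrop : (pth P).dropUntil P' hmem = Walk.cons h.symm Walk.nil :=
        (hup P' P).unique ((hpath P).dropUntil hmem)
          (Walk.IsPath.nil.cons (by simpa using h.ne'))
      have hPeq : pth P = ((pth P).takeUntil P' hmem).concat h.symm := by
        conv_lhs => rw [← Walk.take_spec (pth P) hmem]
        rw [hdrop, Walk.concat_eq_append]
      have : v P = (b P' P - d P P' * v P') / d P' P := by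
        rw [hv]; simp only
        rw [hPeq, solvAux_concat, hqe]
      have hdne := hd P' P h.symm
      field_simp at this
      rw [hb P P']
      linarith [this]
    · have := key P P' h hmem
      have hdne := hd P P' h
      field_simp at this
      linarith [this]
  refine ⟨v, ⟨hvP₀, relation⟩, ?_⟩
  rintro w ⟨hw0, hwrel⟩
  funext P
  have hconn := hG.isConnected
  obtain ⟨walk⟩ := (hconn P₀ P)
  suffices H : ∀ {u P : V} (_ : G.Walk u P), w u = v u → w P = v P by
    exact H walk (by rw [hw0, hvP₀])
  intro u P pw
  induction pw with
  | nil => exact fun h => h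
  | @cons u x y h p ih =>
    intro hu
    apply ih
    have e1 := hwrel u x h
    have e2 := relation u x h
    have hdne := hd u x h
    have : d u x * w x = d u x * v x := by rw [hu] at e1; linarith
    exact mul_left_cancel₀ hdne this
end

section
/- Let V and 𝒯 be finite types, let vert : 𝒯 → Fin 3 → V be such that vert t is injective for each t ∈ 𝒯, and let c : 𝒯 → Fin 3 → ℝ be everywhere positive. Set σ(t) = c t 0·c t 1 + c t 1·c t 2 + c t 2·c t 0, c'(t,i) = σ(t)/c t i, C'(t) = c'(t,0) + c'(t,1) + c'(t,2), and let Q be the 𝒯 × V real matrix with Q t P = c'(t,i) if P = vert t i for some i and Q t P = 0 otherwise. Then the matrix M = Qᵀ·diag(C')⁻¹·Q satisfies: for distinct vertices P ≠ P', M(P,P') = Σ over all t ∈ 𝒯 and indices i ≠ j with vert t i = P and vert t j = P' of c t k (k the remaining index); and M(P,P) = Σ over all t and i with vert t i = P of (c t j · c t k)/(c t i) (j, k the remaining indices). Consequently M = L + W, where L is the symmetric matrix whose off-diagonal entry at (P,P') is the total conductivity between P and P' and whose diagonal is zero, and W is the diagonal matrix with entries W(P,P) = Σ_{t,i : vert t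 i = P} (c t j·c t k)/(c t i). -/
open Matrix

/-- For two distinct indices `i j : Fin 3`, `thirdIndex i j` is the remaining index
(using `0 + 1 + 2 = 0` in `Fin 3`). -/
def thirdIndex (i j : Fin 3) : Fin 3 := -(i + j)

private lemma bt_aux_off (a b d s Cv : ℝ) (ha : a ≠ 0) (hb : b ≠ 0) (hd : d ≠ 0)
    (hC : Cv ≠ 0) (hk : Cv * (a * b * d) = s * s) :
    Cv⁻¹ * (s / a * (s / b)) = d := by
  rw [inv_mul_eq_iff_eq_mul₀ hC]
  field_simp
  linear_combination -hk

private lemma bt_aux_diag (a b d s Cv : ℝ) (ha : a ≠ 0) (hb : b ≠ 0) (hd : d ≠ 0)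
    (hC : Cv ≠ 0) (hk : Cv * (a * b * d) = s * s) :
    Cv⁻¹ * (s / a * (s / a)) = b * d / a := by
  rw [inv_mul_eq_iff_eq_mul₀ hC]
  field_simp
  linear_combination -hk

/-- Novikov–Dynnikov black-triangle factorization of the conductivity
operator of an electric circuit: with star conductivities `c'(t,i) = σ(t)/c(t,i)`,
total star conductivities `C'(t)` and the black triangle matrix `Q`, the matrix
`M = Qᵀ·diag(C')⁻¹·Q` has off-diagonal entries equal to the total conductivity between
the corresponding vertices and diagonal entries `Σ (c t j·c t k)/(c t i)`; hence
`M = L + W`. -/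
theorem black_triangle_factorization_of_conductivity_operator
    {V 𝒯 : Type*} [Fintype V] [Fintype 𝒯] [DecidableEq V] [DecidableEq 𝒯]
    (vert : 𝒯 → Fin 3 → V) (hvert : ∀ t, Function.Injective (vert t))
    (c : 𝒯 → Fin 3 → ℝ) (hc : ∀ t i, 0 < c t i)
    (σ : 𝒯 → ℝ) (hσ : ∀ t, σ t = c t 0 * c t 1 + c t 1 * c t 2 + c t 2 * c t 0)
    (c' : 𝒯 → Fin 3 → ℝ) (hc' : ∀ t i, c' t i = σ t / c t i)
    (C' : 𝒯 → ℝ) (hC' : ∀ t, C' t = c' t 0 + c' t 1 + c' t 2)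
    (Q : Matrix 𝒯 V ℝ)
    (hQ : ∀ t P, Q t P = ∑ i : Fin 3, if vert t i = P then c' t i else 0)
    (M : Matrix V V ℝ) (hM : M = Qᵀ * (Matrix.diagonal C')⁻¹ * Q)
    (L : Matrix V V ℝ)
    (hL : ∀ P P' : V, L P P' = if P = P' then 0 else
      ∑ t : 𝒯, ∑ i : Fin 3, ∑ j : Fin 3,
        if i ≠ j ∧ vert t i = P ∧ vert t j = P' then c t (thirdIndex i j) else 0)
    (W : Matrix V V ℝ)
    (hW : W = Matrix.diagonal (fun P =>
      ∑ t : 𝒯, ∑ i : Fin 3,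
        if vert t i = P then c t (i + 1) * c t (i + 2) / c t i else 0)) :
    (∀ P P' : V, P ≠ P' →
      M P P' = ∑ t : 𝒯, ∑ i : Fin 3, ∑ j : Fin 3,
        if i ≠ j ∧ vert t i = P ∧ vert t j = P' then c t (thirdIndex i j) else 0) ∧
    (∀ P : V,
      M P P = ∑ t : 𝒯, ∑ i : Fin 3,
        if vert t i = P then c t (i + 1) * c t (i + 2) / c t i else 0) ∧
    M = L + W := by
  have hcne : ∀ t i, c t i ≠ 0 := fun t i => (hc t i).ne'
  have hσpos : ∀ t, 0 < σ t := by
    intro t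
    rw [hσ]
    have := mul_pos (hc t 0) (hc t 1)
    have := mul_pos (hc t 1) (hc t 2)
    have := mul_pos (hc t 2) (hc t 0)
    linarith
  have hCpos : ∀ t, 0 < C' t := by
    intro t
    rw [hC', hc', hc', hc']
    exact add_pos (add_pos (div_pos (hσpos t) (hc t 0)) (div_pos (hσpos t) (hc t 1)))
      (div_pos (hσpos t) (hc t 2))
  have hCkey : ∀ t, C' t * (c t 0 * c t 1 * c t 2) = σ t * σ t := by
    intro t
    rw [hC', hc', hc', hc']
    field_simp [hcne t 0, hcne t 1, hcne t 2]
    rw [hσ]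
    ring
  -- main entry formula
  have hMeq : ∀ P P', M P P' = ∑ t : 𝒯, ∑ i : Fin 3, ∑ j : Fin 3,
      if vert t i = P ∧ vert t j = P' then (C' t)⁻¹ * (c' t i * c' t j) else 0 := by
    intro P P'
    have hinv : (Matrix.diagonal C')⁻¹ = Matrix.diagonal (fun t => (C' t)⁻¹) := by
      apply Matrix.inv_eq_right_inv
      rw [Matrix.diagonal_mul_diagonal,
        funext fun t => mul_inv_cancel₀ (hCpos t).ne', Matrix.diagonal_one]
    rw [hM, hinv, Matrix.mul_assoc, Matrix.mul_apply]
    refine Finset.sum_congr rfl fun t _ => ?_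
    rw [Matrix.transpose_apply, Matrix.diagonal_mul, hQ, hQ, Finset.mul_sum,
        Finset.sum_mul_sum]
    refine Finset.sum_congr rfl fun i _ => Finset.sum_congr rfl fun j _ => ?_
    by_cases h1 : vert t i = P <;> by_cases h2 : vert t j = P' <;>
      simp [h1, h2] <;> ring
  -- off-diagonal algebra
  have key : ∀ t (i j : Fin 3), i ≠ j →
      (C' t)⁻¹ * (c' t i * c' t j) = c t (thirdIndex i j) := by
    intro t i j hij
    have hCne := (hCpos t).ne'
    have hk := hCkey t
    rw [hc', hc']
    have hi : i = 0 ∨ i = 1 ∨ i = 2 := by omega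
    have hj : j = 0 ∨ j = 1 ∨ j = 2 := by omega
    rcases hi with rfl | rfl | rfl <;> rcases hj with rfl | rfl | rfl <;> first
      | exact absurd rfl hij
      | (simp only [show thirdIndex 0 1 = 2 from rfl, show thirdIndex 0 2 = 1 from rfl,
            show thirdIndex 1 0 = 2 from rfl, show thirdIndex 1 2 = 0 from rfl,
            show thirdIndex 2 0 = 1 from rfl, show thirdIndex 2 1 = 0 from rfl]
         exact bt_aux_off _ _ _ _ _ (hcne t _) (hcne t _) (hcne t _) hCne
          (by linear_combination hk))
  -- diagonal algebra
  have keyd : ∀ t (i : Fin 3),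
      (C' t)⁻¹ * (c' t i * c' t i) = c t (i + 1) * c t (i + 2) / c t i := by
    intro t i
    have hCne := (hCpos t).ne'
    have hk := hCkey t
    rw [hc']
    have hi : i = 0 ∨ i = 1 ∨ i = 2 := by omega
    rcases hi with rfl | rfl | rfl <;>
      (simp only [show (0:Fin 3) + 1 = 1 from rfl, show (0:Fin 3) + 2 = 2 from rfl,
          show (1:Fin 3) + 1 = 2 from rfl, show (1:Fin 3) + 2 = 0 from rfl,
          show (2:Fin 3) + 1 = 0 from rfl, show (2:Fin 3) + 2 = 1 from rfl]
       exact bt_aux_diag _ _ _ _ _ (hcne t _) (hcne t _) (hcne t _) hCne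
        (by linear_combination hk))
  have part1 : ∀ P P' : V, P ≠ P' →
      M P P' = ∑ t : 𝒯, ∑ i : Fin 3, ∑ j : Fin 3,
        if i ≠ j ∧ vert t i = P ∧ vert t j = P' then c t (thirdIndex i j) else 0 := by
    intro P P' hne
    rw [hMeq]
    refine Finset.sum_congr rfl fun t _ => Finset.sum_congr rfl fun i _ =>
      Finset.sum_congr rfl fun j _ => ?_
    by_cases hij : i = j
    · subst hij
      by_cases h : vert t i = P ∧ vert t i = P'
      · exact absurd (h.1 ▸ h.2) hne
      · simp [h]
    · by_cases h : vert t i = P ∧ vert t j = P'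
      · rw [if_pos h, if_pos ⟨hij, h⟩, key t i j hij]
      · rw [if_neg h, if_neg (fun hh => h hh.2)]
  have part2 : ∀ P : V,
      M P P = ∑ t : 𝒯, ∑ i : Fin 3,
        if vert t i = P then c t (i + 1) * c t (i + 2) / c t i else 0 := by
    intro P
    rw [hMeq]
    refine Finset.sum_congr rfl fun t _ => Finset.sum_congr rfl fun i _ => ?_
    by_cases hA : vert t i = P
    · rw [if_pos hA]
      have hco : ∀ j : Fin 3, (if vert t i = P ∧ vert t j = P then
          (C' t)⁻¹ * (c' t i * c' t j) else 0)
          = if j = i then (C' t)⁻¹ * (c' t i * c' t j) else 0 := by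
        intro j
        congr 1
        simp only [eq_iff_iff]
        constructor
        · rintro ⟨-, hj⟩; exact hvert t (hj.trans hA.symm)
        · rintro rfl; exact ⟨hA, hA⟩
      rw [Finset.sum_congr rfl fun j _ => hco j, Finset.sum_ite_eq' Finset.univ i
        (fun j => (C' t)⁻¹ * (c' t i * c' t j))]
      simp only [Finset.mem_univ, if_true]
      exact keyd t i
    · rw [if_neg hA]
      exact Finset.sum_eq_zero fun j _ => if_neg (fun h => hA h.1)
  refine ⟨part1, part2, ?_⟩
  ext P P'
  by_cases h : P = P'
  · subst h
    rw [Matrix.add_apply, hL P P, if_pos rfl, hW, Matrix.diagonal_apply_eq, zero_add]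
    exact part2 P
  · rw [Matrix.add_apply, hL P P', if_neg h, hW, Matrix.diagonal_apply_ne _ h, add_zero]
    exact part1 P P' h
end

section
/- Let u, v, w : ℤ² → ℝ be nowhere-vanishing and let (u',v',w') be the Laplace transform of (u,v,w) in the normalized gauge. If ψ : ℤ² → ℝ satisfies ((1+uT₁)(1+vT₂)+w)ψ = 0, then the function φ = (1+vT₂)ψ, i.e. φ(m,n) = ψ(m,n) + v(m,n)ψ(m,n+1), satisfies ((1+u'T₁)(1+v'T₂)+w')φ = 0: for all (m,n), (1+w'(m,n))φ(m,n) + u'(m,n)φ(m+1,n) + v'(m,n)φ(m,n+1) + u'(m,n)v'(m+1,n)φ(m+1,n+1) = 0. -/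
/-- The Laplace transformation in the normalized gauge maps solutions
to solutions: if `((1+uT₁)(1+vT₂)+w)ψ = 0` then `φ = (1+vT₂)ψ` satisfies
`((1+u'T₁)(1+v'T₂)+w')φ = 0`, where `(u',v',w')` is the Laplace transform of `(u,v,w)`
in the normalized gauge. -/
theorem laplace_transform_maps_solutions_normalized_gauge
    (u v w H f' u' v' w' : ℤ × ℤ → ℝ)
    (hu : ∀ p, u p ≠ 0) (hv : ∀ p, v p ≠ 0) (hw : ∀ p, w p ≠ 0)
    (hH : ∀ m n : ℤ, H (m, n) = v (m, n) * u (m, n + 1) / (u (m, n) * v (m + 1, n)))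
    (hf' : ∀ m n : ℤ,
      f' (m, n) = H (m - 1, n) * w (m - 1, n) * w (m, n + 1) / w (m - 1, n + 1))
    (hu' : ∀ m n : ℤ, u' (m, n) = f' (m, n) * u (m, n) / w (m, n))
    (hv' : ∀ m n : ℤ, v' (m, n) = f' (m, n) * v (m, n) / w (m, n + 1))
    (hw' : ∀ m n : ℤ, w' (m, n) = f' (m, n) * (1 + w (m, n)) / w (m, n) - 1)
    (ψ φ : ℤ × ℤ → ℝ)
    (hψ : ∀ m n : ℤ, (1 + w (m, n)) * ψ (m, n) + u (m, n) * ψ (m + 1, n)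
      + v (m, n) * ψ (m, n + 1) + u (m, n) * v (m + 1, n) * ψ (m + 1, n + 1) = 0)
    (hφ : ∀ m n : ℤ, φ (m, n) = ψ (m, n) + v (m, n) * ψ (m, n + 1)) :
    ∀ m n : ℤ, (1 + w' (m, n)) * φ (m, n) + u' (m, n) * φ (m + 1, n)
      + v' (m, n) * φ (m, n + 1) + u' (m, n) * v' (m + 1, n) * φ (m + 1, n + 1) = 0 := by
  intro m n
  have key : ∀ a b : ℤ, w (a, b) * ψ (a, b) = -(φ (a, b) + u (a, b) * φ (a + 1, b)) := by
    intro a b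
    rw [hφ a b, hφ (a + 1) b]
    linear_combination hψ a b
  have star : w (m, n + 1) * (1 + w (m, n)) * φ (m, n)
      + w (m, n + 1) * u (m, n) * φ (m + 1, n)
      + v (m, n) * w (m, n) * φ (m, n + 1)
      + v (m, n) * u (m, n + 1) * w (m, n) * φ (m + 1, n + 1) = 0 := by
    have k1 := key m n
    have k2 := key m (n + 1)
    have h := hφ m n
    linear_combination w (m, n) * w (m, n + 1) * h + w (m, n + 1) * k1
      + v (m, n) * w (m, n) * k2
  have hf2 := hf' (m + 1) n
  simp only [add_sub_cancel_right] at hf2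
  rw [hH] at hf2
  have h4 := hw (m, n)
  have h5 := hw (m, n + 1)
  have h6 := hw (m + 1, n + 1)
  have h7 := hu (m, n)
  have h8 := hv (m + 1, n)
  have hf2' : f' (m + 1, n)
      = v (m, n) * u (m, n + 1) * w (m, n) * w (m + 1, n + 1)
        / (u (m, n) * v (m + 1, n) * w (m, n + 1)) := by
    rw [hf2]; field_simp
  have expand : (1 + w' (m, n)) * φ (m, n) + u' (m, n) * φ (m + 1, n)
      + v' (m, n) * φ (m, n + 1) + u' (m, n) * v' (m + 1, n) * φ (m + 1, n + 1)
      = f' (m, n) / (w (m, n) * w (m, n + 1))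
        * (w (m, n + 1) * (1 + w (m, n)) * φ (m, n)
          + w (m, n + 1) * u (m, n) * φ (m + 1, n)
          + v (m, n) * w (m, n) * φ (m, n + 1)
          + v (m, n) * u (m, n + 1) * w (m, n) * φ (m + 1, n + 1)) := by
    rw [hw' m n, hu' m n, hv' m n, hv' (m + 1) n, hf2']
    field_simp
    ring
  rw [expand, star, mul_zero]
end
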